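/- Let X be a random vector in ℝ^p and Y a random variable. If η ∈ ℝ^{p×d} satisfies Y ⫫ X | ηᵀX, and γ ∈ ℝ^{p×e} is a matrix whose column space contains the column space of η, then Y ⫫ X | γᵀX. That is, any linear subspace containing a dimension reduction subspace is itself a dimension reduction subspace. -/

import Mathlib

open MeasureTheory ProbabilityTheory Matrix

/-- `f` and `g` are conditionally independent given (the σ-algebra generated by) `h`. -/
def CondIndepGiven {Ω : Type*} [mΩ : MeasurableSpace Ω] [StandardBorelSpace Ω]
    {α β γ : Type*} [MeasurableSpace α] [MeasurableSpace β] [MeasurableSpace γ]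
    (μ : Measure Ω) [IsFiniteMeasure μ]
    (f : Ω → α) (g : Ω → β) (h : Ω → γ) : Prop :=
  CondIndepFun (MeasurableSpace.comap h inferInstance ⊓ mΩ) inf_le_right f g μ

/-- The column space of a matrix `η`. -/
def colSpace {p d : ℕ} (η : Matrix (Fin p) (Fin d) ℝ) : Submodule ℝ (Fin p → ℝ) :=
  LinearMap.range η.mulVecLin

lemma condIndepFun_mono_of_le_comap
    {Ω α β δ₁ δ₂ : Type*} [mΩ : MeasurableSpace Ω] [StandardBorelSpace Ω]
    [MeasurableSpace α] [MeasurableSpace β] [MeasurableSpace δ₁] [MeasurableSpace δ₂]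
    (μ : Measure Ω) [IsFiniteMeasure μ]
    {X : Ω → β} {Y : Ω → α} {Z₁ : Ω → δ₁} {Z₂ : Ω → δ₂}
    (hX : Measurable X) (hY : Measurable Y)
    (h12 : MeasurableSpace.comap Z₁ inferInstance ≤ MeasurableSpace.comap Z₂ inferInstance)
    (h2X : MeasurableSpace.comap Z₂ inferInstance ≤ MeasurableSpace.comap X inferInstance)
    (h : CondIndepFun (MeasurableSpace.comap Z₁ inferInstance ⊓ mΩ) inf_le_right Y X μ) :
    CondIndepFun (MeasurableSpace.comap Z₂ inferInstance ⊓ mΩ) inf_le_right Y X μ := by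
  have hmX : MeasurableSpace.comap X inferInstance ≤ mΩ := hX.comap_le
  have h1 : MeasurableSpace.comap Z₁ inferInstance ⊓ mΩ ≤ mΩ := inf_le_right
  have h2 : MeasurableSpace.comap Z₂ inferInstance ⊓ mΩ ≤ mΩ := inf_le_right
  have h12' : MeasurableSpace.comap Z₁ inferInstance ⊓ mΩ
      ≤ MeasurableSpace.comap Z₂ inferInstance ⊓ mΩ := inf_le_inf_right _ h12
  have h2X' : MeasurableSpace.comap Z₂ inferInstance ⊓ mΩ
      ≤ MeasurableSpace.comap X inferInstance := inf_le_left.trans h2X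
  have h1X : MeasurableSpace.comap Z₁ inferInstance ⊓ mΩ
      ≤ MeasurableSpace.comap X inferInstance := h12'.trans h2X'
  rw [condIndepFun_iff_condExp_inter_preimage_eq_mul hY hX] at h ⊢
  intro s t hs ht
  set A := Y ⁻¹' s with hAdef
  have hAm : MeasurableSet A := hY hs
  set f₁ : Ω → ℝ := μ[A.indicator (fun _ => (1:ℝ)) | MeasurableSpace.comap Z₁ inferInstance ⊓ mΩ]
    with hf₁
  have hf₁int : Integrable f₁ μ := integrable_condExp
  have hf₁sm : StronglyMeasurable[MeasurableSpace.comap Z₁ inferInstance ⊓ mΩ] f₁ :=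
    stronglyMeasurable_condExp
  have hind : ∀ C : Set Ω, MeasurableSet C → Integrable (C.indicator (fun _ => (1:ℝ))) μ :=
    fun C hC => (integrable_const 1).indicator hC
  have hbdd : ∀ C : Set Ω, ∀ x : Ω, ‖C.indicator (fun _ => (1:ℝ)) x‖ ≤ 1 := by
    intro C x; by_cases hx : x ∈ C <;> simp [Set.indicator_apply, hx]
  have hmulint : ∀ (g : Ω → ℝ), Integrable g μ → AEStronglyMeasurable g μ →
      ∀ C : Set Ω, MeasurableSet C →
      Integrable (fun x => g x * C.indicator (fun _ => (1:ℝ)) x) μ := by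
    intro g hg hgm C hC
    have := hg.bdd_mul (f := C.indicator (fun _ => (1:ℝ)))
      ((stronglyMeasurable_const.indicator hC).aestronglyMeasurable) (Filter.Eventually.of_forall (hbdd C))
    simpa [mul_comm] using this
  -- pull-out product identity at level m₁
  have pull1 : ∀ C : Set Ω, MeasurableSet C →
      μ[(fun x => f₁ x * C.indicator (fun _ => (1:ℝ)) x) |
          MeasurableSpace.comap Z₁ inferInstance ⊓ mΩ]
        =ᵐ[μ] fun x => f₁ x *
          (μ[C.indicator (fun _ => (1:ℝ)) | MeasurableSpace.comap Z₁ inferInstance ⊓ mΩ]) x :=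
    fun C hC => condExp_mul_of_stronglyMeasurable_left hf₁sm
      (hmulint f₁ hf₁int (hf₁sm.mono h1).aestronglyMeasurable C hC) (hind C hC)
  -- Step 1: f₁ has the condexp property w.r.t. comap X
  have step1 : ∀ C : Set Ω, MeasurableSet[MeasurableSpace.comap X inferInstance] C →
      ∫ x in C, f₁ x ∂μ = ∫ x in C, A.indicator (fun _ => (1:ℝ)) x ∂μ := by
    rintro C ⟨t', ht', rfl⟩
    have hCm : MeasurableSet (X ⁻¹' t') := hX ht'
    calc ∫ x in X ⁻¹' t', f₁ x ∂μ
        = ∫ x, f₁ x * (X ⁻¹' t').indicator (fun _ => (1:ℝ)) x ∂μ := by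
          rw [← integral_indicator hCm]
          congr 1; funext x
          by_cases hx : x ∈ X ⁻¹' t' <;> simp [Set.indicator_apply, hx]
      _ = ∫ x, (μ[(fun x => f₁ x * (X ⁻¹' t').indicator (fun _ => (1:ℝ)) x) |
            MeasurableSpace.comap Z₁ inferInstance ⊓ mΩ]) x ∂μ := (integral_condExp h1).symm
      _ = ∫ x, f₁ x * (μ[(X ⁻¹' t').indicator (fun _ => (1:ℝ)) |
            MeasurableSpace.comap Z₁ inferInstance ⊓ mΩ]) x ∂μ :=
          integral_congr_ae (pull1 _ hCm)
      _ = ∫ x, (μ[(A ∩ X ⁻¹' t').indicator (fun _ => (1:ℝ)) |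
            MeasurableSpace.comap Z₁ inferInstance ⊓ mΩ]) x ∂μ :=
          (integral_congr_ae (h s t' hs ht')).symm
      _ = ∫ x, (A ∩ X ⁻¹' t').indicator (fun _ => (1:ℝ)) x ∂μ := integral_condExp h1
      _ = ∫ x in X ⁻¹' t', A.indicator (fun _ => (1:ℝ)) x ∂μ := by
          rw [← integral_indicator hCm]
          congr 1; funext x
          by_cases hx : x ∈ X ⁻¹' t' <;> by_cases hx' : x ∈ A <;>
            simp [Set.indicator_apply, hx, hx', Set.mem_inter_iff]
  -- Step 2: f₁ is an a.e. version of the conditional expectation given comap X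
  have step2 : f₁ =ᵐ[μ]
      μ[A.indicator (fun _ => (1:ℝ)) | MeasurableSpace.comap X inferInstance] :=
    ae_eq_condExp_of_forall_setIntegral_eq hmX (hind A hAm)
      (fun C _ _ => hf₁int.integrableOn) (fun C hC _ => step1 C hC)
      (hf₁sm.mono h1X).aestronglyMeasurable
  -- Step 3: the conditional expectation of A given m₂ is a.e. f₁
  have h2A : μ[A.indicator (fun _ => (1:ℝ)) | MeasurableSpace.comap Z₂ inferInstance ⊓ mΩ]
      =ᵐ[μ] f₁ := by
    calc μ[A.indicator (fun _ => (1:ℝ)) | MeasurableSpace.comap Z₂ inferInstance ⊓ mΩ]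
        =ᵐ[μ] μ[μ[A.indicator (fun _ => (1:ℝ)) | MeasurableSpace.comap X inferInstance] |
            MeasurableSpace.comap Z₂ inferInstance ⊓ mΩ] :=
          (condExp_condExp_of_le h2X' hmX).symm
      _ =ᵐ[μ] μ[f₁ | MeasurableSpace.comap Z₂ inferInstance ⊓ mΩ] := condExp_congr_ae step2.symm
      _ =ᵐ[μ] f₁ := by
          rw [condExp_of_stronglyMeasurable h2 (hf₁sm.mono h12') hf₁int]
  -- Main chain
  set B := X ⁻¹' t with hBdef
  have hBm : MeasurableSet B := hX ht
  have hBm2 : StronglyMeasurable[MeasurableSpace.comap X inferInstance]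
      (B.indicator (fun _ => (1:ℝ))) :=
    stronglyMeasurable_const.indicator ⟨t, ht, rfl⟩
  have hABind : (A ∩ B).indicator (fun _ => (1:ℝ))
      = fun x => B.indicator (fun _ => (1:ℝ)) x * A.indicator (fun _ => (1:ℝ)) x := by
    funext x
    by_cases hx : x ∈ A <;> by_cases hx' : x ∈ B <;>
      simp [Set.indicator_apply, hx, hx', Set.mem_inter_iff]
  calc μ[(A ∩ B).indicator (fun _ => (1:ℝ)) | MeasurableSpace.comap Z₂ inferInstance ⊓ mΩ]
      =ᵐ[μ] μ[μ[(A ∩ B).indicator (fun _ => (1:ℝ)) | MeasurableSpace.comap X inferInstance] |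
          MeasurableSpace.comap Z₂ inferInstance ⊓ mΩ] := (condExp_condExp_of_le h2X' hmX).symm
    _ =ᵐ[μ] μ[(fun x => f₁ x * B.indicator (fun _ => (1:ℝ)) x) |
          MeasurableSpace.comap Z₂ inferInstance ⊓ mΩ] := by
        refine condExp_congr_ae ?_
        have e1 : μ[(A ∩ B).indicator (fun _ => (1:ℝ)) | MeasurableSpace.comap X inferInstance]
            =ᵐ[μ] fun x => B.indicator (fun _ => (1:ℝ)) x *
              (μ[A.indicator (fun _ => (1:ℝ)) | MeasurableSpace.comap X inferInstance]) x := by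
          rw [hABind]
          exact condExp_mul_of_stronglyMeasurable_left hBm2
            ((hind A hAm).bdd_mul
              (stronglyMeasurable_const.indicator hBm).aestronglyMeasurable (Filter.Eventually.of_forall (hbdd B)))
            (hind A hAm)
        refine e1.trans ?_
        filter_upwards [step2] with x hx
        rw [← hx]
        exact mul_comm _ _
    _ =ᵐ[μ] fun x => f₁ x * (μ[B.indicator (fun _ => (1:ℝ)) |
          MeasurableSpace.comap Z₂ inferInstance ⊓ mΩ]) x := by
        exact condExp_mul_of_stronglyMeasurable_left (hf₁sm.mono h12')
          (hmulint f₁ hf₁int (hf₁sm.mono h1).aestronglyMeasurable B hBm) (hind B hBm)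
    _ =ᵐ[μ] fun x => (μ[A.indicator (fun _ => (1:ℝ)) |
            MeasurableSpace.comap Z₂ inferInstance ⊓ mΩ]) x *
          (μ[B.indicator (fun _ => (1:ℝ)) | MeasurableSpace.comap Z₂ inferInstance ⊓ mΩ]) x := by
        filter_upwards [h2A] with x hx
        rw [hx]

/-- **Supersets of dimension reduction subspaces are dimension reduction subspaces.**
If `Y ⫫ X | ηᵀX` and the column space of `γ` contains that of `η`, then `Y ⫫ X | γᵀX`. -/
theorem drs_mono
    {Ω : Type*} [MeasurableSpace Ω] [StandardBorelSpace Ω]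
    (μ : Measure Ω) [IsProbabilityMeasure μ] {p d e : ℕ}
    (X : Ω → Fin p → ℝ) (hX : Measurable X) (Y : Ω → ℝ) (hY : Measurable Y)
    (η : Matrix (Fin p) (Fin d) ℝ) (γ : Matrix (Fin p) (Fin e) ℝ)
    (hsub : colSpace η ≤ colSpace γ)
    (hDRS : CondIndepGiven μ Y X (fun ω => η.transpose.mulVec (X ω))) :
    CondIndepGiven μ Y X (fun ω => γ.transpose.mulVec (X ω)) := by
  -- factor η = γ * B
  have hcol : ∀ j : Fin d, ∃ c : Fin e → ℝ, γ.mulVec c = fun i => η i j := by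
    intro j
    have : (fun i => η i j) ∈ colSpace γ := hsub ⟨Pi.single j 1, by
      funext i; simp [mulVecLin, Matrix.mulVec_single]⟩
    exact this
  choose c hc using hcol
  set B : Matrix (Fin e) (Fin d) ℝ := Matrix.of (fun k j => c j k) with hBdef
  have hηγB : η = γ * B := by
    ext i j
    have := congrFun (hc j) i
    simp [Matrix.mul_apply, Matrix.mulVec, dotProduct, hBdef] at this ⊢
    rw [← this]
  have hT : (fun ω => η.transpose.mulVec (X ω))
      = (fun v => B.transpose.mulVec v) ∘ (fun ω => γ.transpose.mulVec (X ω)) := by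
    funext ω
    simp only [Function.comp_apply, hηγB, Matrix.transpose_mul, Matrix.mulVec_mulVec]
  have hG : (fun ω => γ.transpose.mulVec (X ω))
      = (fun v => γ.transpose.mulVec v) ∘ X := rfl
  have hBm : Measurable (fun v : Fin e → ℝ => B.transpose.mulVec v) :=
    (B.transpose.mulVecLin.continuous_of_finiteDimensional).measurable
  have hγm : Measurable (fun v : Fin p → ℝ => γ.transpose.mulVec v) :=
    (γ.transpose.mulVecLin.continuous_of_finiteDimensional).measurable
  have h12 : MeasurableSpace.comap (fun ω => η.transpose.mulVec (X ω)) inferInstance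
      ≤ MeasurableSpace.comap (fun ω => γ.transpose.mulVec (X ω)) inferInstance := by
    rw [hT, ← MeasurableSpace.comap_comp]
    exact MeasurableSpace.comap_mono hBm.comap_le
  have h2X : MeasurableSpace.comap (fun ω => γ.transpose.mulVec (X ω)) inferInstance
      ≤ MeasurableSpace.comap X inferInstance := by
    rw [hG, ← MeasurableSpace.comap_comp]
    exact MeasurableSpace.comap_mono hγm.comap_le
  exact condIndepFun_mono_of_le_comap μ hX hY h12 h2X hDRS
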